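/- In a time-dependent network, for every walk W from s to d there exists a walk P from s to d with no repeated vertices such that A_P(t) ≤ A_W(t) for every t. -/

import Mathlib

open scoped ENNReal

/-- Arrival function of a walk: starting at `u` and then visiting the vertices of `l` in
order, departing at time `t`. -/
def walkArr {V : Type*} (A : V → V → ℝ≥0∞ → ℝ≥0∞) : V → List V → ℝ≥0∞ → ℝ≥0∞
  | _, [], t => t
  | u, v :: l, t => walkArr A v l (A u v t)

/-- `l` (together with start vertex `s`) encodes a walk from `s` to `d`: the walk is the
nonempty vertex sequence `s :: l`, whose last vertex must be `d`. -/
def IsWalkTo {V : Type*} (s d : V) (l : List V) : Prop :=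
  (s :: l).getLast (List.cons_ne_nil _ _) = d

/-- The end-to-end arrival function: infimum over all walks from `s` to `d`. -/
noncomputable def endToEnd {V : Type*} (A : V → V → ℝ≥0∞ → ℝ≥0∞) (s d : V) (t : ℝ≥0∞) :
    ℝ≥0∞ :=
  ⨅ l : {l : List V // IsWalkTo s d l}, walkArr A s l.1 t

/-- The FIFO conditions on a time-dependent network: each edge arrival function is
monotone and arrival is not before departure. -/
def FIFO {V : Type*} (A : V → V → ℝ≥0∞ → ℝ≥0∞) : Prop :=
  ∀ u v : V, Monotone (A u v) ∧ ∀ t, t ≤ A u v t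


section Aux

lemma getLast_eq_of_eq {α : Type*} {l l' : List α} (h : l = l') (h1 : l ≠ []) (h2 : l' ≠ []) :
    l.getLast h1 = l'.getLast h2 := by subst h; rfl

variable {V : Type*} {A : V → V → ℝ≥0∞ → ℝ≥0∞}

lemma walkArr_mono (hA : FIFO A) (l : List V) : ∀ u : V, Monotone (walkArr A u l) := by
  induction l with
  | nil => intro u a b h; exact h
  | cons v l ih => intro u a b h; exact ih v ((hA u v).1 h)

lemma le_walkArr (hA : FIFO A) (l : List V) : ∀ u t, t ≤ walkArr A u l t := by
  induction l with
  | nil => intro u t; exact le_rfl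
  | cons v l ih => intro u t; exact le_trans ((hA u v).2 t) (ih v _)

lemma walkArr_append (w : V) (l2 : List V) :
    ∀ (l1 : List V) (u : V) (t : ℝ≥0∞),
      walkArr A u (l1 ++ w :: l2) t = walkArr A w l2 (walkArr A u (l1 ++ [w]) t) := by
  intro l1
  induction l1 with
  | nil => intro u t; rfl
  | cons x l1 ih => intro u t; exact ih x (A u x t)

lemma aux_nodup (hA : FIFO A) :
    ∀ (n : ℕ) (l : List V), l.length ≤ n → ∀ s d : V, IsWalkTo s d l →
      ∃ l' : List V, IsWalkTo s d l' ∧ (s :: l').Nodup ∧ l' ⊆ l ∧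
        ∀ t, walkArr A s l' t ≤ walkArr A s l t := by
  intro n
  induction n with
  | zero =>
    intro l hlen s d hl
    have : l = [] := List.length_eq_zero_iff.mp (Nat.le_zero.mp hlen)
    subst this
    exact ⟨[], hl, by simp, by simp, fun t => le_rfl⟩
  | succ n ih =>
    intro l hlen s d hl
    by_cases hs : s ∈ l
    · obtain ⟨l1, l2, rfl⟩ := List.append_of_mem hs
      have hlen2 : l2.length ≤ n := by
        have := hlen; simp [List.length_append] at this; omega
      have hl2 : IsWalkTo s d l2 := by
        unfold IsWalkTo at hl ⊢
        calc (s :: l2).getLast (List.cons_ne_nil _ _)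
            = ((s :: l1) ++ (s :: l2)).getLast
                (List.append_ne_nil_of_right_ne_nil _ (List.cons_ne_nil _ _)) :=
              (List.getLast_append_of_right_ne_nil (s :: l1) (s :: l2) (List.cons_ne_nil _ _)).symm
          _ = (s :: (l1 ++ s :: l2)).getLast (List.cons_ne_nil _ _) :=
              getLast_eq_of_eq (by simp) _ _
          _ = d := hl
      obtain ⟨l', h1, h2, h3, h4⟩ := ih l2 hlen2 s d hl2
      refine ⟨l', h1, h2, fun x hx => List.mem_append_right _ (List.mem_cons_of_mem _ (h3 hx)), fun t => ?_⟩
      refine le_trans (h4 t) ?_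
      rw [walkArr_append s l2 l1 s t]
      exact walkArr_mono hA l2 s (le_walkArr hA _ _ _)
    · match l, hl with
      | [], hl => exact ⟨[], hl, by simp, by simp, fun t => le_rfl⟩
      | v :: l'', hl =>
        have hlen2 : l''.length ≤ n := by simp at hlen; omega
        have hl2 : IsWalkTo v d l'' := by
          unfold IsWalkTo at hl ⊢
          rwa [List.getLast_cons (List.cons_ne_nil _ _)] at hl
        obtain ⟨l', h1, h2, h3, h4⟩ := ih l'' hlen2 v d hl2
        refine ⟨v :: l', ?_, ?_, ?_, fun t => h4 (A s v t)⟩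
        · unfold IsWalkTo at h1 ⊢
          rwa [List.getLast_cons (List.cons_ne_nil _ _)]
        · refine List.nodup_cons.mpr ⟨?_, h2⟩
          intro hmem
          exact hs (List.cons_subset_cons v h3 hmem)
        · exact List.cons_subset_cons v h3

end Aux

/-- For every walk `W` from `s` to `d` there is a walk `P` from `s` to `d` with no
repeated vertices whose arrival function is pointwise at most that of `W`. -/
theorem exists_nodup_walk_le {V : Type*} [Fintype V]
    (A : V → V → ℝ≥0∞ → ℝ≥0∞) (hA : FIFO A) (s d : V)
    (l : List V) (hl : IsWalkTo s d l) :
    ∃ l' : List V, IsWalkTo s d l' ∧ (s :: l').Nodup ∧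
      ∀ t, walkArr A s l' t ≤ walkArr A s l t := by
  obtain ⟨l', h1, h2, _, h4⟩ := aux_nodup hA l.length l le_rfl s d hl
  exact ⟨l', h1, h2, h4⟩
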